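/- Let p be an odd prime and ξ = exp(2πi/p). Then the Gauss sum G(ξ) = Σ_{k=0}^{p-1} ξ^{k²} can be written as γ·(ξ-1)^{(p-1)/2} where γ is a unit in the ring of integers Z[ξ]. -/

import Mathlib

open Complex Finset Polynomial

set_option linter.unusedVariables false


lemma sum_zmod_eq_sum_range {p : ℕ} [NeZero p] {M : Type*} [AddCommMonoid M] (f : ZMod p → M) :
    ∑ x : ZMod p, f x = ∑ k ∈ Finset.range p, f (k : ZMod p) := by
  refine Finset.sum_nbij' (fun x => ZMod.val x) (fun k => (k : ZMod p)) ?_ ?_ ?_ ?_ ?_ <;>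
    intro a ha <;>
    simp_all [Finset.mem_range, ZMod.val_lt, ZMod.natCast_zmod_val, ZMod.val_cast_of_lt,
      Nat.mod_eq_of_lt]

lemma choose_sq_sum_dvd {p : ℕ} (hp : p.Prime) (hodd : Odd p) {j : ℕ} (hj : j < (p - 1) / 2) :
    p ∣ ∑ k ∈ Finset.range p, (k ^ 2).choose j := by
  haveI : Fact p.Prime := ⟨hp⟩
  haveI : NeZero p := ⟨hp.ne_zero⟩
  have hpne2 : p ≠ 2 := by rintro rfl; simp [Nat.odd_iff] at hodd
  have hp2 : 2 < p := lt_of_le_of_ne hp.two_le (Ne.symm hpne2)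
  have h2m : 2 * ((p - 1) / 2) = p - 1 := by
    obtain ⟨t, ht⟩ := hodd; omega
  rw [← ZMod.natCast_eq_zero_iff, Nat.cast_sum]
  have hfac : ((Nat.factorial j : ℕ) : ZMod p) ≠ 0 := by
    rw [Ne, ZMod.natCast_eq_zero_iff, hp.dvd_factorial]
    omega
  have key : ((Nat.factorial j : ℕ) : ZMod p) * ∑ k ∈ Finset.range p, ((k ^ 2).choose j : ZMod p) = 0 := by
    rw [Finset.mul_sum]
    have h1 : ∀ k ∈ Finset.range p,
        ((Nat.factorial j : ℕ) : ZMod p) * ((k ^ 2).choose j : ZMod p)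
          = (descPochhammer (ZMod p) j).eval (((k : ZMod p)) ^ 2) := by
      intro k _
      rw [← Nat.cast_mul, ← Nat.descFactorial_eq_factorial_mul_choose,
        ← descPochhammer_eval_eq_descFactorial]
      push_cast
      ring_nf
    rw [Finset.sum_congr rfl h1, ← sum_zmod_eq_sum_range (fun x => (descPochhammer (ZMod p) j).eval (x ^ 2))]
    have h3 : ∀ x : ZMod p, (descPochhammer (ZMod p) j).eval (x ^ 2)
        = ∑ i ∈ Finset.range (j + 1), (descPochhammer (ZMod p) j).coeff i * x ^ (2 * i) := by
      intro x
      rw [Polynomial.eval_eq_sum_range' (n := j + 1)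
        (by rw [descPochhammer_natDegree]; omega)]
      exact Finset.sum_congr rfl fun i _ => by rw [← pow_mul]
    simp_rw [h3]
    rw [Finset.sum_comm]
    apply Finset.sum_eq_zero
    intro i hi
    rw [← Finset.mul_sum]
    have : (∑ x : ZMod p, x ^ (2 * i)) = 0 := by
      apply FiniteField.sum_pow_lt_card_sub_one
      rw [ZMod.card]
      have := Finset.mem_range.mp hi
      omega
    rw [this, mul_zero]
  rcases mul_eq_zero.mp key with h | h
  · exact absurd h hfac
  · exact h

lemma aux_units (p : ℕ) (hp : p.Prime) (hp2 : 2 < p) [Fact p.Prime] [NeZero p]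
    (ξ : ℂ) (hξp : ξ ^ p = 1) (hξ1 : ξ ≠ 1) (hprim : IsPrimitiveRoot ξ p)
    (R : Subring ℂ) (hξR : ξ ∈ R) :
    ∀ k, 1 ≤ k → k < p → ∃ t ∈ R, (∑ i ∈ Finset.range k, ξ ^ i) * t = 1 := by
  intro k hk1 hkp
  have hl0 : ξ - 1 ≠ 0 := sub_ne_zero.mpr hξ1
  have hk0 : ((k : ZMod p)) ≠ 0 := by
    rw [Ne, ZMod.natCast_eq_zero_iff]
    intro h
    exact absurd (Nat.le_of_dvd (by omega) h) (by omega)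
  set k' := ((k : ZMod p))⁻¹.val with hk'
  have hkk' : ((k * k' : ℕ) : ZMod p) = ((1 : ℕ) : ZMod p) := by
    push_cast
    rw [hk', ZMod.natCast_zmod_val]
    exact mul_inv_cancel₀ hk0
  have hmod : (k * k') % p = 1 := by
    have h1 : (k * k') % p = 1 % p := (ZMod.natCast_eq_natCast_iff _ _ _).mp hkk'
    rwa [Nat.one_mod_eq_one.mpr (by omega)] at h1
  have hpow : ξ ^ (k * k') = ξ := by
    conv_lhs => rw [← Nat.div_add_mod (k * k') p]
    rw [pow_add, pow_mul, hξp, one_pow, one_mul, hmod, pow_one]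
  refine ⟨∑ i ∈ Finset.range k', (ξ ^ k) ^ i,
    Subring.sum_mem _ fun i _ => Subring.pow_mem _ (Subring.pow_mem _ hξR _) _, ?_⟩
  have hgeom1 : (∑ i ∈ Finset.range k, ξ ^ i) * (ξ - 1) = ξ ^ k - 1 := geom_sum_mul ξ k
  have hgeom2 : (∑ i ∈ Finset.range k', (ξ ^ k) ^ i) * (ξ ^ k - 1) = ξ ^ (k * k') - 1 := by
    rw [geom_sum_mul, ← pow_mul]
  apply mul_right_cancel₀ hl0
  calc (∑ i ∈ Finset.range k, ξ ^ i) * (∑ i ∈ Finset.range k', (ξ ^ k) ^ i) * (ξ - 1)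
      = (∑ i ∈ Finset.range k', (ξ ^ k) ^ i) * ((∑ i ∈ Finset.range k, ξ ^ i) * (ξ - 1)) := by ring
    _ = ξ ^ (k * k') - 1 := by rw [hgeom1, hgeom2]
    _ = 1 * (ξ - 1) := by rw [hpow]; ring

lemma aux_punit (p : ℕ) (hp : p.Prime) (hp2 : 2 < p) (hodd : Odd p) [Fact p.Prime] [NeZero p]
    (ξ : ℂ) (hξp : ξ ^ p = 1) (hξ1 : ξ ≠ 1) (hprim : IsPrimitiveRoot ξ p)
    (R : Subring ℂ) (hξR : ξ ∈ R)
    (hs : ∀ k, 1 ≤ k → k < p → ∃ t ∈ R, (∑ i ∈ Finset.range k, ξ ^ i) * t = 1) :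
    ∃ u ∈ R, ∃ v ∈ R, u * v = 1 ∧ (p : ℂ) = (ξ - 1) ^ (p - 1) * u := by
  set l : ℂ := ξ - 1 with hl
  refine ⟨∏ k ∈ Finset.Ico 1 p, ∑ i ∈ Finset.range k, ξ ^ i,
    Subring.prod_mem _ fun k _ => Subring.sum_mem _ fun i _ => Subring.pow_mem _ hξR _, ?_⟩
  -- inverse
  have hex : ∀ k : ℕ, ∃ t, (k ∈ Finset.Ico 1 p → t ∈ R ∧ (∑ i ∈ Finset.range k, ξ ^ i) * t = 1) := by
    intro k
    by_cases hk : k ∈ Finset.Ico 1 p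
    · obtain ⟨hk1, hkp⟩ := Finset.mem_Ico.mp hk
      obtain ⟨t, htR, hts⟩ := hs k hk1 hkp
      exact ⟨t, fun _ => ⟨htR, hts⟩⟩
    · exact ⟨0, fun h => absurd h hk⟩
  choose t ht using hex
  refine ⟨∏ k ∈ Finset.Ico 1 p, t k,
    Subring.prod_mem _ fun k hk => (ht k hk).1, ?_, ?_⟩
  · rw [← Finset.prod_mul_distrib]
    exact Finset.prod_eq_one fun k hk => (ht k hk).2
  -- the identity p = l^(p-1) * ∏ s_k
  · have himg : (Finset.range p).image (fun k => ξ ^ k) = Polynomial.nthRootsFinset p (1 : ℂ) := by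
      apply Finset.eq_of_subset_of_card_le
      · intro x hx
        simp only [Finset.mem_image, Finset.mem_range] at hx
        obtain ⟨k, _, rfl⟩ := hx
        exact (Polynomial.mem_nthRootsFinset hp.pos 1).mpr
          (by rw [← pow_mul, mul_comm, pow_mul, hξp, one_pow])
      · rw [hprim.card_nthRootsFinset,
          Finset.card_image_of_injOn fun a ha b hb hab =>
            hprim.pow_inj (Finset.mem_range.mp ha) (Finset.mem_range.mp hb) hab,
          Finset.card_range]
    have hpoly : (∑ i ∈ Finset.range p, (X : ℂ[X]) ^ i)
        = ∏ k ∈ Finset.Ico 1 p, (X - C (ξ ^ k)) := by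
      have h1 : (X : ℂ[X]) ^ p - 1 = ∏ k ∈ Finset.range p, (X - C (ξ ^ k)) := by
        rw [X_pow_sub_one_eq_prod hp.pos hprim, ← himg,
          Finset.prod_image fun a ha b hb hab =>
            hprim.pow_inj (Finset.mem_range.mp ha) (Finset.mem_range.mp hb) hab]
      have h2 : ∏ k ∈ Finset.range p, ((X : ℂ[X]) - C (ξ ^ k))
          = (X - 1) * ∏ k ∈ Finset.Ico 1 p, (X - C (ξ ^ k)) := by
        rw [Finset.range_eq_Ico, Finset.prod_eq_prod_Ico_succ_bot hp.pos]
        norm_num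
      have h3 := geom_sum_mul (X : ℂ[X]) p
      refine mul_right_cancel₀ (b := (X : ℂ[X]) - 1) ?_ ?_
      · have h5 : ((X : ℂ[X]) - 1) = X - C 1 := by rw [map_one]
        rw [h5]
        exact X_sub_C_ne_zero 1
      · rw [h3, h1, h2, mul_comm]
    have hprod : (p : ℂ) = ∏ k ∈ Finset.Ico 1 p, (1 - ξ ^ k) := by
      have h4 := congrArg (Polynomial.eval 1) hpoly
      simpa [Polynomial.eval_finset_sum, Polynomial.eval_prod] using h4
    have heven : Even (p - 1) := Nat.Odd.sub_odd hodd odd_one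
    rw [hprod]
    calc ∏ k ∈ Finset.Ico 1 p, (1 - ξ ^ k)
        = ∏ k ∈ Finset.Ico 1 p, (-1 * ((∑ i ∈ Finset.range k, ξ ^ i) * l)) := by
          refine Finset.prod_congr rfl fun k _ => ?_
          rw [geom_sum_mul]
          ring
      _ = (-1 : ℂ) ^ (p - 1) * ((∏ k ∈ Finset.Ico 1 p, (∑ i ∈ Finset.range k, ξ ^ i)) * l ^ (p - 1)) := by
          rw [Finset.prod_mul_distrib, Finset.prod_mul_distrib, Finset.prod_const,
            Finset.prod_const, Nat.card_Ico]
      _ = l ^ (p - 1) * ∏ k ∈ Finset.Ico 1 p, (∑ i ∈ Finset.range k, ξ ^ i) := by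
          rw [heven.neg_one_pow]
          ring

lemma aux_dvd (p : ℕ) (hp : p.Prime) (hp2 : 2 < p) (hodd : Odd p) [Fact p.Prime] [NeZero p]
    (ξ : ℂ) (hξp : ξ ^ p = 1) (hξ1 : ξ ≠ 1)
    (R : Subring ℂ) (hξR : ξ ∈ R)
    (u : ℂ) (huR : u ∈ R) (hup : (p : ℂ) = (ξ - 1) ^ (p - 1) * u) :
    ∃ δ ∈ R, (∑ k ∈ Finset.range p, ξ ^ (k ^ 2)) = (ξ - 1) ^ ((p - 1) / 2) * δ := by
  set l : ℂ := ξ - 1 with hl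
  set m := (p - 1) / 2 with hm
  have hmm : 2 * m = p - 1 := by obtain ⟨t, ht⟩ := hodd; omega
  set N := (p - 1) ^ 2 + 1 with hN
  have hGexp : (∑ k ∈ Finset.range p, ξ ^ (k ^ 2))
      = ∑ j ∈ Finset.range N, ((∑ k ∈ Finset.range p, (k ^ 2).choose j : ℕ) : ℂ) * l ^ j := by
    have hterm : ∀ k ∈ Finset.range p,
        ξ ^ (k ^ 2) = ∑ j ∈ Finset.range N, ((k ^ 2).choose j : ℂ) * l ^ j := by
      intro k hk
      have hkp : k < p := Finset.mem_range.mp hk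
      have hk2 : k ^ 2 + 1 ≤ N := by
        have : k ^ 2 ≤ (p - 1) ^ 2 := Nat.pow_le_pow_left (by omega) 2
        omega
      have hxi : ξ ^ (k ^ 2) = (l + 1) ^ (k ^ 2) := by rw [hl]; ring_nf
      rw [hxi, add_pow]
      rw [← Finset.sum_subset (Finset.range_subset_range.mpr hk2)
        (fun j _ hj => by
          rw [Nat.choose_eq_zero_of_lt (by simpa using hj)]
          simp)]
      refine Finset.sum_congr rfl fun j hj => ?_
      rw [one_pow, mul_one, mul_comm]
    rw [Finset.sum_congr rfl hterm, Finset.sum_comm]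
    refine Finset.sum_congr rfl fun j _ => ?_
    rw [← Finset.sum_mul]
    push_cast
    ring
  have hex : ∀ j : ℕ, ∃ δ, δ ∈ R ∧ (j ∈ Finset.range N →
      ((∑ k ∈ Finset.range p, (k ^ 2).choose j : ℕ) : ℂ) * l ^ j = l ^ m * δ) := by
    intro j
    by_cases hjm : m ≤ j
    · refine ⟨((∑ k ∈ Finset.range p, (k ^ 2).choose j : ℕ) : ℂ) * l ^ (j - m),
        Subring.mul_mem _ (natCast_mem _ _)
          (Subring.pow_mem _ (Subring.sub_mem _ hξR (Subring.one_mem _)) _), fun _ => ?_⟩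
      rw [mul_comm (l ^ m), mul_assoc, ← pow_add]
      congr 2
      omega
    · push_neg at hjm
      obtain ⟨d, hd⟩ := choose_sq_sum_dvd hp hodd hjm
      refine ⟨(d : ℂ) * u * l ^ (p - 1 + j - m),
        Subring.mul_mem _ (Subring.mul_mem _ (natCast_mem _ _) huR)
          (Subring.pow_mem _ (Subring.sub_mem _ hξR (Subring.one_mem _)) _), fun _ => ?_⟩
      rw [hd]
      push_cast
      rw [hup]
      have harith : l ^ (p - 1) * l ^ j = l ^ m * l ^ (p - 1 + j - m) := by
        rw [← pow_add, ← pow_add]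
        congr 1
        omega
      calc (l ^ (p - 1) * u) * (d : ℂ) * l ^ j
          = (l ^ (p - 1) * l ^ j) * ((d : ℂ) * u) := by ring
        _ = (l ^ m * l ^ (p - 1 + j - m)) * ((d : ℂ) * u) := by rw [harith]
        _ = l ^ m * ((d : ℂ) * u * l ^ (p - 1 + j - m)) := by ring
  choose δf hδfR hδf using hex
  refine ⟨∑ j ∈ Finset.range N, δf j, Subring.sum_mem _ fun j _ => hδfR j, ?_⟩
  rw [hGexp, Finset.sum_congr rfl fun j hj => hδf j hj, ← Finset.mul_sum]

lemma aux_sq (p : ℕ) (hp : p.Prime) (hp2 : 2 < p) [Fact p.Prime] [NeZero p]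
    (ξ : ℂ) (hξp : ξ ^ p = 1) (hξ1 : ξ ≠ 1) (hprim : IsPrimitiveRoot ξ p)
    (R : Subring ℂ) (hξR : ξ ∈ R) :
    ∃ ε ∈ R, ε ^ 2 = 1 ∧ (∑ k ∈ Finset.range p, ξ ^ (k ^ 2)) ^ 2 = ε * p := by
  have hFF : ringChar (ZMod p) ≠ 2 := by rw [ZMod.ringChar_zmod_n]; omega
  set ψ : AddChar (ZMod p) ℂ := AddChar.zmodChar p hξp with hψ
  set χ : MulChar (ZMod p) ℂ := (quadraticChar (ZMod p)).ringHomComp (Int.castRingHom ℂ) with hχ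
  have hψprim : ψ.IsPrimitive := AddChar.zmodChar_primitive_of_primitive_root p hprim
  have hχ1 : χ ≠ 1 :=
    (MulChar.ringHomComp_ne_one_iff (RingHom.injective_int _)).mpr (quadraticChar_ne_one hFF)
  have hχ2 : χ.IsQuadratic := (quadraticChar_isQuadratic (ZMod p)).comp _
  have hψ1 : ψ ≠ 1 := by
    rw [AddChar.zmod_char_ne_one_iff]
    have : ψ (1 : ZMod p) = ξ := by
      rw [hψ, show ((1 : ZMod p)) = ((1 : ℕ) : ZMod p) by norm_num,
        AddChar.zmodChar_apply', pow_one]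
    rw [this]
    exact hξ1
  -- G = gaussSum χ ψ
  have hG : (∑ k ∈ Finset.range p, ξ ^ (k ^ 2)) = gaussSum χ ψ := by
    have step1 : (∑ k ∈ Finset.range p, ξ ^ (k ^ 2)) = ∑ x : ZMod p, ψ (x ^ 2) := by
      rw [sum_zmod_eq_sum_range (fun x => ψ (x ^ 2))]
      refine Finset.sum_congr rfl fun k _ => ?_
      rw [show ((k : ZMod p)) ^ 2 = ((k ^ 2 : ℕ) : ZMod p) by push_cast; ring,
        hψ, AddChar.zmodChar_apply']
    have step2 : ∑ x : ZMod p, ψ (x ^ 2)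
        = ∑ a : ZMod p, ∑ x ∈ Finset.univ.filter (fun x : ZMod p => x ^ 2 = a), ψ (x ^ 2) :=
      (Finset.sum_fiberwise_of_maps_to (fun x _ => Finset.mem_univ _) _).symm
    have step3 : ∀ a : ZMod p,
        (∑ x ∈ Finset.univ.filter (fun x : ZMod p => x ^ 2 = a), ψ (x ^ 2))
          = (((quadraticChar (ZMod p) a : ℤ) : ℂ) + 1) * ψ a := by
      intro a
      have hcard : ((Finset.univ.filter (fun x : ZMod p => x ^ 2 = a)).card : ℤ)
          = quadraticChar (ZMod p) a + 1 := by
        have := quadraticChar_card_sqrts hFF a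
        rwa [Set.toFinset_setOf] at this
      rw [Finset.sum_congr rfl fun x hx => by rw [(Finset.mem_filter.mp hx).2],
        Finset.sum_const, nsmul_eq_mul]
      congr 1
      exact_mod_cast hcard
    rw [step1, step2, Finset.sum_congr rfl fun a _ => step3 a]
    have expand : ∀ a : ZMod p, (((quadraticChar (ZMod p) a : ℤ) : ℂ) + 1) * ψ a
        = χ a * ψ a + ψ a := by
      intro a
      rw [hχ, MulChar.ringHomComp_apply, eq_intCast]
      ring
    rw [Finset.sum_congr rfl fun a _ => expand a, Finset.sum_add_distrib,
      AddChar.sum_eq_zero_of_ne_one hψ1, add_zero]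
    rfl
  have hsq := gaussSum_sq hχ1 hχ2 hψprim
  have hval : quadraticChar (ZMod p) (-1) = 1 ∨ quadraticChar (ZMod p) (-1) = -1 := by
    rcases quadraticChar_isQuadratic (ZMod p) (-1) with h | h
    · exfalso
      rw [quadraticChar_eq_zero_iff] at h
      exact (neg_ne_zero.mpr one_ne_zero) h
    · exact h
  refine ⟨((quadraticChar (ZMod p) (-1) : ℤ) : ℂ), intCast_mem _ _, ?_, ?_⟩
  · rcases hval with h | h <;> rw [h] <;> norm_num
  · rw [hG, hsq, hχ, MulChar.ringHomComp_apply, ZMod.card]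
    norm_num


/-- The quadratic Gauss sum `G(ξ) = Σ_{k=0}^{p-1} ξ^{k²}` equals `γ (ξ-1)^{(p-1)/2}`
with `γ` a unit of `ℤ[ξ]`. -/
theorem gauss_sum_unit_times_power (p : ℕ) (hp : p.Prime) (hodd : Odd p)
    (ξ : ℂ) (hξ : ξ = Complex.exp (2 * Real.pi * Complex.I / p)) :
    ∃ γ ∈ Subring.closure {ξ}, (∃ γ' ∈ Subring.closure {ξ}, γ * γ' = 1) ∧
      (∑ k ∈ Finset.range p, ξ ^ (k ^ 2)) = γ * (ξ - 1) ^ ((p - 1) / 2) := by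
  haveI : Fact p.Prime := ⟨hp⟩
  haveI : NeZero p := ⟨hp.ne_zero⟩
  have hpne2 : p ≠ 2 := by rintro rfl; simp [Nat.odd_iff] at hodd
  have hp2 : 2 < p := lt_of_le_of_ne hp.two_le (Ne.symm hpne2)
  have hprim : IsPrimitiveRoot ξ p := hξ ▸ Complex.isPrimitiveRoot_exp p hp.ne_zero
  have hξp : ξ ^ p = 1 := hprim.pow_eq_one
  have hξ1 : ξ ≠ 1 := hprim.ne_one (by omega)
  set R := Subring.closure ({ξ} : Set ℂ) with hR
  have hξR : ξ ∈ R := Subring.subset_closure rfl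
  set l : ℂ := ξ - 1 with hl
  have hl0 : l ≠ 0 := sub_ne_zero.mpr hξ1
  set m := (p - 1) / 2 with hm
  have hmm : 2 * m = p - 1 := by obtain ⟨t, ht⟩ := hodd; omega
  have hs := aux_units p hp hp2 ξ hξp hξ1 hprim R hξR
  obtain ⟨u, huR, v, hvR, huv, hup⟩ := aux_punit p hp hp2 hodd ξ hξp hξ1 hprim R hξR hs
  obtain ⟨δ, hδR, hGδ⟩ := aux_dvd p hp hp2 hodd ξ hξp hξ1 R hξR u huR hup
  obtain ⟨ε, hεR, hε2, hG2⟩ := aux_sq p hp hp2 ξ hξp hξ1 hprim R hξR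
  have hδ2 : δ ^ 2 = ε * u := by
    have h1 : l ^ (2 * m) * δ ^ 2 = l ^ (2 * m) * (ε * u) := by
      have h0 : (l ^ m * δ) ^ 2 = ε * (l ^ (p - 1) * u) := by rw [← hGδ, hG2, ← hup]
      rw [← hmm] at h0
      calc l ^ (2 * m) * δ ^ 2 = (l ^ m * δ) ^ 2 := by ring
        _ = ε * (l ^ (2 * m) * u) := by rw [h0]
        _ = l ^ (2 * m) * (ε * u) := by ring
    exact mul_left_cancel₀ (pow_ne_zero _ hl0) h1
  refine ⟨δ, hδR, ⟨δ * (ε * v), Subring.mul_mem _ hδR (Subring.mul_mem _ hεR hvR), ?_⟩,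
    by rw [hGδ, mul_comm]⟩
  calc δ * (δ * (ε * v)) = δ ^ 2 * ε * v := by ring
    _ = ε ^ 2 * (u * v) := by rw [hδ2]; ring
    _ = 1 := by rw [hε2, huv, one_mul]
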